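/- Let G be a finite connected simple graph of order n such that 2·τ(G) > n and τ(G) = n−k, and let W be its (unique) twin class of cardinality τ(G). If the subgraph of G induced by W is complete, then 2·β_p(G) ≤ 2n − k. -/

import Mathlib

open Classical SimpleGraph

noncomputable section

/-- The distance from a vertex to a set of vertices. -/
def setDist {V : Type*} (G : SimpleGraph V) (u : V) (S : Set V) : ℕ :=
  sInf ((G.dist u) '' S)

/-- A locating partition of a graph: a partition of the vertex set such that every
vertex is uniquely determined by its vector of distances to the parts. -/
def IsLocatingPartition {V : Type*} (G : SimpleGraph V) (P : Set (Set V)) : Prop :=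
  Setoid.IsPartition P ∧
    ∀ u v : V, (∀ S ∈ P, setDist G u S = setDist G v S) → u = v

/-- The partition dimension: the minimum cardinality of a locating partition. -/
def partitionDim {V : Type*} (G : SimpleGraph V) : ℕ :=
  sInf {k | ∃ P : Set (Set V), IsLocatingPartition G P ∧ P.ncard = k}

/-- Two vertices are twins if they have the same neighbors other than themselves. -/
def IsTwin {V : Type*} (G : SimpleGraph V) (u v : V) : Prop :=
  G.neighborSet u \ {v} = G.neighborSet v \ {u}

/-- The twin class of a vertex. -/
def twinClass {V : Type*} (G : SimpleGraph V) (u : V) : Set V :=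
  {v | IsTwin G u v}

/-- The twin number: the maximum cardinality of a twin class. -/
def twinNumber {V : Type*} (G : SimpleGraph V) : ℕ :=
  sSup {k | ∃ u : V, (twinClass G u).ncard = k}

section Aux

variable {V : Type*}

lemma setDist_singleton (G : SimpleGraph V) (u z : V) : setDist G u {z} = G.dist u z := by
  simp [setDist]

lemma setDist_eq_zero_of_mem (G : SimpleGraph V) {u : V} {S : Set V} (h : u ∈ S) :
    setDist G u S = 0 :=
  Nat.eq_zero_of_le_zero (Nat.sInf_le ⟨u, h, SimpleGraph.dist_self⟩)

lemma mem_of_setDist_eq_zero (G : SimpleGraph V) (hc : G.Connected) {v : V} {S : Set V}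
    (hne : S.Nonempty) (h : setDist G v S = 0) : v ∈ S := by
  have himg : ((G.dist v) '' S).Nonempty := hne.image _
  have h0 := Nat.sInf_mem himg
  rw [show sInf ((G.dist v) '' S) = setDist G v S from rfl, h] at h0
  obtain ⟨w, hwS, hw0⟩ := h0
  have hv : v = w := hc.dist_eq_zero_iff.mp hw0
  rw [hv]; exact hwS

lemma dist_le_twin (G : SimpleGraph V) (hc : G.Connected) {w w' x : V}
    (ht : IsTwin G w w') (hx : x ≠ w) (hx' : x ≠ w') :
    G.dist x w' ≤ G.dist x w := by
  obtain ⟨p, hp⟩ := (hc w x).exists_walk_length_eq_dist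
  rw [SimpleGraph.dist_comm] at hp
  cases p with
  | nil => exact absurd rfl hx.symm
  | cons h' q' =>
    rename_i y
    rw [SimpleGraph.Walk.length_cons] at hp
    by_cases hy : y = w'
    · subst hy
      have hle : G.dist x y ≤ q'.length := by
        have := SimpleGraph.dist_le q'.reverse
        rwa [SimpleGraph.Walk.length_reverse] at this
      omega
    · have hyw : G.Adj w' y := by
        have ht' : G.neighborSet w \ {w'} = G.neighborSet w' \ {w} := ht
        have hmem : y ∈ G.neighborSet w \ {w'} := ⟨h', hy⟩
        rw [ht'] at hmem
        exact hmem.1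
      have hle : G.dist x w' ≤ q'.length + 1 := by
        have := SimpleGraph.dist_le (q'.reverse.concat hyw.symm)
        rwa [SimpleGraph.Walk.length_concat, SimpleGraph.Walk.length_reverse] at this
      omega

lemma dist_eq_of_adj_twin (G : SimpleGraph V) (hc : G.Connected) {w w' x : V}
    (ht : IsTwin G w w') (hx : x ≠ w) (hx' : x ≠ w') :
    G.dist x w = G.dist x w' := by
  have ht' : IsTwin G w' w := by
    have h1 : G.neighborSet w \ {w'} = G.neighborSet w' \ {w} := ht
    exact h1.symm
  exact le_antisymm (dist_le_twin G hc ht' hx' hx) (dist_le_twin G hc ht hx hx')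

lemma ore_dom [Fintype V] (E : V → V → Prop) (hsym : ∀ a b, E a b → E b a)
    (U A : Set V) (hAU : A ⊆ U)
    (hwit : ∀ u ∈ A, ∃ z ∈ U, z ≠ u ∧ E u z) :
    ∃ Z ⊆ U, 2 * Z.ncard ≤ U.ncard ∧ ∀ u ∈ A, u ∉ Z → ∃ z ∈ Z, E u z := by
  classical
  set Dom : Set V → Prop := fun D => ∀ u ∈ A, u ∈ D ∨ ∃ z ∈ D, z ≠ u ∧ E u z with hDomDef
  have hUD : Dom U := fun u hu => Or.inl (hAU hu)
  set s : Set ℕ := {c | ∃ D, D ⊆ U ∧ Dom D ∧ D.ncard = c} with hsdef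
  have hs : s.Nonempty := ⟨U.ncard, U, subset_rfl, hUD, rfl⟩
  obtain ⟨D, hDU, hDdom, hDcard⟩ := Nat.sInf_mem hs
  have hmin : ∀ D', D' ⊆ U → Dom D' → D.ncard ≤ D'.ncard := by
    intro D' h1 h2
    rw [hDcard]
    exact Nat.sInf_le ⟨D', h1, h2, rfl⟩
  by_cases hhalf : 2 * D.ncard ≤ U.ncard
  · refine ⟨D, hDU, hhalf, ?_⟩
    intro u hu hnot
    rcases hDdom u hu with h | ⟨z, hz, _, hE⟩
    · exact absurd h hnot
    · exact ⟨z, hz, hE⟩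
  · refine ⟨U \ D, Set.diff_subset, ?_, ?_⟩
    · have h1 : (U \ D).ncard = U.ncard - D.ncard := Set.ncard_diff hDU (Set.toFinite _)
      have h2 : D.ncard ≤ U.ncard := Set.ncard_le_ncard hDU (Set.toFinite _)
      omega
    · intro u hu hnot
      have huU : u ∈ U := hAU hu
      have huD : u ∈ D := by
        by_contra h
        exact hnot ⟨huU, h⟩
      by_contra hcon
      push_neg at hcon
      have hdom' : Dom (D \ {u}) := by
        intro a ha
        by_cases hau : a = u
        · subst hau
          obtain ⟨z, hzU, hzu, hE⟩ := hwit a ha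
          have hzD : z ∈ D := by
            by_contra h
            exact hcon z ⟨hzU, h⟩ hE
          exact Or.inr ⟨z, ⟨hzD, fun h => hzu h⟩, hzu, hE⟩
        · by_cases haD : a ∈ D
          · exact Or.inl ⟨haD, fun h => hau h⟩
          · rcases hDdom a ha with h | ⟨z, hzD, hza, hE⟩
            · exact absurd h haD
            · by_cases hzu : z = u
              · subst hzu
                exact absurd (hsym a z hE) (hcon a ⟨hAU ha, haD⟩)
              · exact Or.inr ⟨z, ⟨hzD, fun h => hzu h⟩, hza, hE⟩
      have h1 : D.ncard ≤ (D \ {u}).ncard :=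
        hmin _ (Set.diff_subset.trans hDU) hdom'
      have h2 : (D \ {u}).ncard < D.ncard :=
        Set.ncard_diff_singleton_lt_of_mem huD (Set.toFinite _)
      omega

lemma exists_injOn_of_ncard_le [Fintype V] {s t : Set V}
    (h : s.ncard ≤ t.ncard) : ∃ f : V → V, Set.InjOn f s ∧ ∀ x ∈ s, f x ∈ t := by
  classical
  letI : Fintype s := Fintype.ofFinite _
  letI : Fintype t := Fintype.ofFinite _
  have hs : Fintype.card s ≤ Fintype.card t := by
    rwa [← Nat.card_eq_fintype_card, ← Nat.card_eq_fintype_card,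
      Nat.card_coe_set_eq, Nat.card_coe_set_eq]
  obtain ⟨e⟩ := Function.Embedding.nonempty_of_card_le hs
  refine ⟨fun x => if hx : x ∈ s then (e ⟨x, hx⟩ : V) else x, ?_, ?_⟩
  · intro a ha b hb hab
    simp only [dif_pos ha, dif_pos hb] at hab
    have := e.injective (Subtype.coe_injective hab)
    exact Subtype.ext_iff.mp this
  · intro x hx
    simp only [dif_pos hx]
    exact (e ⟨x, hx⟩).2

end Aux

/-- For a connected graph `G` of order `n` with `2·τ(G) > n` and `τ(G) = n - k`,
if the twin class `W` of maximum cardinality induces a complete subgraph,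
then `2·β_p(G) ≤ 2n - k`. -/
theorem partitionDim_upper_of_clique_twinClass {V : Type*} [Fintype V]
    (G : SimpleGraph V) (hG : G.Connected) (n : ℕ) (hn : Fintype.card V = n)
    (hτ : n < 2 * twinNumber G)
    (k : ℕ) (hk : twinNumber G = n - k)
    (W : Set V) (hW : ∃ u : V, W = twinClass G u)
    (hWcard : W.ncard = twinNumber G)
    (hclique : ∀ u ∈ W, ∀ v ∈ W, u ≠ v → G.Adj u v) :
    2 * partitionDim G ≤ 2 * n - k := by
  classical
  obtain ⟨u0, hWu0⟩ := hW
  haveI : Nonempty V := hG.nonempty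
  have hu0W : u0 ∈ W := by rw [hWu0]; exact rfl
  have htwinW : ∀ w ∈ W, IsTwin G u0 w := by
    intro w hw; rw [hWu0] at hw; exact hw
  rw [← hWcard] at hτ hk
  set U : Set V := Wᶜ with hUdef
  have hWU : ∀ x ∈ W, x ∉ U := fun x hx hx' => hx' hx
  have hUW : ∀ x ∈ U, x ∉ W := fun x hx => hx
  have hcardUW : W.ncard + U.ncard = n := by
    rw [← hn, ← Nat.card_eq_fintype_card]
    exact Set.ncard_add_ncard_compl W
  have hWpos : 0 < W.ncard := (Set.ncard_pos (Set.toFinite _)).mpr ⟨u0, hu0W⟩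
  -- uniform adjacency to the twin class
  have huniform : ∀ u ∈ U, ∀ w ∈ W, G.Adj u0 u → G.Adj w u := by
    intro u hu w hw hadj
    by_cases hwu0 : w = u0
    · rw [hwu0]; exact hadj
    · have ht : G.neighborSet u0 \ {w} = G.neighborSet w \ {u0} := htwinW w hw
      have hmem : u ∈ G.neighborSet u0 \ {w} :=
        ⟨hadj, fun he => hUW u hu (by rw [show u = w from he]; exact hw)⟩
      rw [ht] at hmem
      exact hmem.1
  -- every vertex outside W adjacent to u0 has a resolving vertex outside W
  have hwitness : ∀ u ∈ U, G.Adj u0 u → ∃ z ∈ U, z ≠ u ∧ G.dist u z ≠ G.dist u0 z := by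
    intro u hu hadj
    have hnt : ¬ IsTwin G u0 u := fun h => hUW u hu (by rw [hWu0]; exact h)
    have hneq : G.neighborSet u0 \ {u} ≠ G.neighborSet u \ {u0} := hnt
    have hex : ∃ z, ¬ (z ∈ G.neighborSet u0 \ {u} ↔ z ∈ G.neighborSet u \ {u0}) := by
      by_contra hall
      have hall' : ∀ z, (z ∈ G.neighborSet u0 \ {u} ↔ z ∈ G.neighborSet u \ {u0}) :=
        fun z => not_not.mp (fun h => hall ⟨z, h⟩)
      exact hneq (Set.ext hall')
    obtain ⟨z, hz⟩ := hex
    by_cases h1 : z ∈ G.neighborSet u0 \ {u}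
    · have h2 : z ∉ G.neighborSet u \ {u0} := fun h => hz ⟨fun _ => h, fun _ => h1⟩
      have hz_ne_u : z ≠ u := h1.2
      have hadj0z : G.Adj u0 z := h1.1
      have hz_ne_u0 : z ≠ u0 := fun he => G.irrefl (he ▸ hadj0z)
      have hnadjuz : ¬ G.Adj u z := fun h => h2 ⟨h, hz_ne_u0⟩
      have hzU : z ∈ U := by
        rw [hUdef, Set.mem_compl_iff]
        intro hzW
        exact hnadjuz (huniform u hu z hzW hadj).symm
      refine ⟨z, hzU, hz_ne_u, ?_⟩
      have hd0 : G.dist u0 z = 1 := SimpleGraph.dist_eq_one_iff_adj.mpr hadj0z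
      rw [hd0]
      intro h1'
      exact hnadjuz (SimpleGraph.dist_eq_one_iff_adj.mp h1')
    · have h2 : z ∈ G.neighborSet u \ {u0} := by
        by_contra h
        exact hz ⟨fun hh => absurd hh h1, fun hh => absurd hh h⟩
      have hadjuz : G.Adj u z := h2.1
      have hz_ne_u0 : z ≠ u0 := h2.2
      have hz_ne_u : z ≠ u := fun he => G.irrefl (he ▸ hadjuz)
      have hnadj0z : ¬ G.Adj u0 z := fun h => h1 ⟨h, hz_ne_u⟩
      have hzU : z ∈ U := by
        rw [hUdef, Set.mem_compl_iff]
        intro hzW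
        exact hnadj0z (hclique u0 hu0W z hzW (Ne.symm hz_ne_u0))
      refine ⟨z, hzU, hz_ne_u, ?_⟩
      have hd1 : G.dist u z = 1 := SimpleGraph.dist_eq_one_iff_adj.mpr hadjuz
      rw [hd1]
      intro h1'
      exact hnadj0z (SimpleGraph.dist_eq_one_iff_adj.mp h1'.symm)
  -- the set of vertices outside W adjacent to u0
  set A : Set V := {x | x ∈ U ∧ G.Adj u0 x} with hAdef
  obtain ⟨Z, hZU, hZcard, hZcov⟩ :=
    ore_dom (V := V)
      (fun a b => (a ∈ A ∧ b ∈ U ∧ G.dist a b ≠ G.dist u0 b) ∨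
                  (b ∈ A ∧ a ∈ U ∧ G.dist b a ≠ G.dist u0 a))
      (fun a b h => h.symm) U A (fun x hx => hx.1)
      (by
        intro x hx
        obtain ⟨z, hzU, hzx, hdz⟩ := hwitness x hx.1 hx.2
        exact ⟨z, hzU, hzx, Or.inl ⟨hx, hzU, hdz⟩⟩)
  set M : Set V := U \ Z with hMdef
  have hMU : M ⊆ U := Set.diff_subset
  have hMcard : M.ncard ≤ U.ncard := Set.ncard_le_ncard hMU (Set.toFinite _)
  have hWm1 : (W \ {u0}).ncard = W.ncard - 1 :=
    Set.ncard_diff_singleton_of_mem hu0W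
  have hUltW : U.ncard < W.ncard := by omega
  have hMle : M.ncard ≤ (W \ {u0}).ncard := by omega
  obtain ⟨f, hfinj, hft⟩ := exists_injOn_of_ncard_le hMle
  have hfW : ∀ a ∈ M, f a ∈ W := fun a ha => (hft a ha).1
  have hfne : ∀ a ∈ M, f a ≠ u0 := fun a ha => (hft a ha).2
  -- the partition
  set P1 : Set (Set V) := (fun u => ({u, f u} : Set V)) '' M with hP1def
  set P2 : Set (Set V) := (fun w => ({w} : Set V)) '' (W \ (f '' M)) with hP2def
  set P3 : Set (Set V) := (fun z => ({z} : Set V)) '' Z with hP3def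
  set P : Set (Set V) := P1 ∪ P2 ∪ P3 with hPdef
  have hP1mem : ∀ a ∈ M, ({a, f a} : Set V) ∈ P := fun a ha => Or.inl (Or.inl ⟨a, ha, rfl⟩)
  have hP2mem : ∀ w_, w_ ∈ W → w_ ∉ f '' M → ({w_} : Set V) ∈ P :=
    fun w_ h1 h2 => Or.inl (Or.inr ⟨w_, ⟨h1, h2⟩, rfl⟩)
  have hP3mem : ∀ z ∈ Z, ({z} : Set V) ∈ P := fun z hz => Or.inr ⟨z, hz, rfl⟩
  -- the canonical part of each vertex
  set g : V → Set V := fun a =>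
    if a ∈ M then {a, f a} else if a ∈ f '' M then {Function.invFunOn f M a, a} else {a}
    with hgdef
  have hgM : ∀ a ∈ M, g a = {a, f a} := by
    intro a ha; simp only [hgdef]; rw [if_pos ha]
  have hgF : ∀ a, a ∉ M → a ∈ f '' M → g a = {Function.invFunOn f M a, a} := by
    intro a h1 h2; simp only [hgdef]; rw [if_neg h1, if_pos h2]
  have hgO : ∀ a, a ∉ M → a ∉ f '' M → g a = {a} := by
    intro a h1 h2; simp only [hgdef]; rw [if_neg h1, if_neg h2]
  have hgmem : ∀ a : V, g a ∈ P ∧ a ∈ g a := by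
    intro a
    by_cases haM : a ∈ M
    · rw [hgM a haM]
      exact ⟨hP1mem a haM, Set.mem_insert _ _⟩
    · by_cases haF : a ∈ f '' M
      · rw [hgF a haM haF]
        obtain ⟨hiM, hieq⟩ := Function.invFunOn_pos (f := f) (s := M)
          (by obtain ⟨x, hx, he⟩ := haF; exact ⟨x, hx, he⟩)
        constructor
        · have h3 := hP1mem _ hiM
          rw [hieq] at h3
          exact h3
        · exact Set.mem_insert_iff.mpr (Or.inr rfl)
      · rw [hgO a haM haF]
        refine ⟨?_, rfl⟩
        by_cases haW : a ∈ W
        · exact hP2mem a haW haF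
        · have haU : a ∈ U := by rw [hUdef]; exact haW
          have haZ : a ∈ Z := by
            by_contra h
            exact haM ⟨haU, h⟩
          exact hP3mem a haZ
  have hguniq : ∀ T ∈ P, ∀ a ∈ T, T = g a := by
    intro T hT a haT
    rcases hT with (⟨x, hxM, rfl⟩ | ⟨w_, hw_, rfl⟩) | ⟨z, hz, rfl⟩
    · rcases Set.mem_insert_iff.mp haT with h | h
      · rw [show a = x from h, hgM x hxM]
      · have h2 : a = f x := h
        rw [h2]
        have hfxM : f x ∉ M := fun hh => hWU (f x) (hfW x hxM) (hMU hh)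
        have hfxF : f x ∈ f '' M := ⟨x, hxM, rfl⟩
        rw [hgF _ hfxM hfxF]
        have hp := Function.invFunOn_pos (f := f) (s := M) ⟨x, hxM, rfl⟩
        have h3 : Function.invFunOn f M (f x) = x := hfinj hp.1 hxM hp.2
        rw [h3]
    · have h2 : a = w_ := haT
      rw [h2, hgO w_ (fun hh => hWU w_ hw_.1 (hMU hh)) hw_.2]
    · have h2 : a = z := haT
      have hzM : z ∉ M := fun hh => hh.2 hz
      have hzF : z ∉ f '' M := by
        rintro ⟨x, hxM, he⟩
        exact hWU z (by rw [← he]; exact hfW x hxM) (hZU hz)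
      rw [h2, hgO z hzM hzF]
  have hpartition : Setoid.IsPartition P := by
    constructor
    · intro hemp
      rcases hemp with (⟨x, hxM, he⟩ | ⟨w_, hw_, he⟩) | ⟨z, hz, he⟩
      · have h3 : x ∈ (∅ : Set V) := by rw [← he]; exact Set.mem_insert _ _
        exact h3
      · have h3 : w_ ∈ (∅ : Set V) := by rw [← he]; exact rfl
        exact h3
      · have h3 : z ∈ (∅ : Set V) := by rw [← he]; exact rfl
        exact h3
    · intro a
      obtain ⟨h1, h2⟩ := hgmem a
      exact ⟨g a, ⟨h1, h2⟩, fun y hy => hguniq y hy.1 a hy.2⟩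
  have hloc : ∀ u v : V, (∀ S ∈ P, setDist G u S = setDist G v S) → u = v := by
    intro u v hd
    by_contra hne
    obtain ⟨hguP, hug⟩ := hgmem u
    have h0 : setDist G v (g u) = 0 := by
      rw [← hd (g u) hguP]
      exact setDist_eq_zero_of_mem G hug
    have hvg : v ∈ g u := mem_of_setDist_eq_zero G hG ⟨u, hug⟩ h0
    obtain ⟨p, hpM, hpair⟩ :
        ∃ p, p ∈ M ∧ ((u = p ∧ v = f p) ∨ (v = p ∧ u = f p)) := by
      by_cases huM : u ∈ M
      · rw [hgM u huM] at hvg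
        rcases Set.mem_insert_iff.mp hvg with h | h
        · exact absurd h.symm hne
        · exact ⟨u, huM, Or.inl ⟨rfl, h⟩⟩
      · by_cases huF : u ∈ f '' M
        · rw [hgF u huM huF] at hvg
          obtain ⟨hiM, hieq⟩ := Function.invFunOn_pos (f := f) (s := M)
            (by obtain ⟨x, hx, he⟩ := huF; exact ⟨x, hx, he⟩)
          rcases Set.mem_insert_iff.mp hvg with h | h
          · exact ⟨_, hiM, Or.inr ⟨h, hieq.symm⟩⟩
          · exact absurd (show v = u from h) (Ne.symm hne)
        · rw [hgO u huM huF] at hvg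
          exact absurd (show v = u from hvg) (Ne.symm hne)
    have hdeq : ∀ S ∈ P, setDist G p S = setDist G (f p) S := by
      intro S hS
      rcases hpair with ⟨h1, h2⟩ | ⟨h1, h2⟩
      · rw [← h2, ← h1]; exact hd S hS
      · rw [← h2, ← h1]; exact (hd S hS).symm
    have hpU : p ∈ U := hMU hpM
    have hfpW : f p ∈ W := hfW p hpM
    have hfpne : f p ≠ u0 := hfne p hpM
    have htwfp : IsTwin G (f p) u0 := by
      have h1 : G.neighborSet u0 \ {f p} = G.neighborSet (f p) \ {u0} := htwinW (f p) hfpW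
      exact h1.symm
    by_cases hadj : G.Adj u0 p
    · have hpA : p ∈ A := ⟨hpU, hadj⟩
      have hpZ : p ∉ Z := hpM.2
      obtain ⟨z, hzZ, hE⟩ := hZcov p hpA hpZ
      have hzU : z ∈ U := hZU hzZ
      have hR : G.dist p z ≠ G.dist u0 z := by
        rcases hE with ⟨_, _, h⟩ | ⟨hzA, _, h⟩
        · exact h
        · have hdp : G.dist u0 p = 1 := SimpleGraph.dist_eq_one_iff_adj.mpr hadj
          have hdz : G.dist u0 z = 1 := SimpleGraph.dist_eq_one_iff_adj.mpr hzA.2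
          rw [hdz, SimpleGraph.dist_comm]
          rw [hdp] at h
          exact h
      have hzP := hP3mem z hzZ
      have heq := hdeq {z} hzP
      rw [setDist_singleton, setDist_singleton] at heq
      have htw : G.dist z (f p) = G.dist z u0 :=
        dist_eq_of_adj_twin G hG htwfp
          (fun h => hWU (f p) hfpW (by rw [← show z = f p from h]; exact hzU))
          (fun h => hWU u0 hu0W (by rw [← show z = u0 from h]; exact hzU))
      apply hR
      rw [heq, SimpleGraph.dist_comm, htw, SimpleGraph.dist_comm]
    · have hu0F : u0 ∉ f '' M := by
        rintro ⟨x, hxM, he⟩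
        exact hfne x hxM he
      have hu0P := hP2mem u0 hu0W hu0F
      have heq := hdeq {u0} hu0P
      rw [setDist_singleton, setDist_singleton] at heq
      have h1 : G.dist (f p) u0 = 1 :=
        SimpleGraph.dist_eq_one_iff_adj.mpr (hclique (f p) hfpW u0 hu0W hfpne)
      rw [h1] at heq
      have h2 : G.Adj p u0 := SimpleGraph.dist_eq_one_iff_adj.mp heq
      exact hadj h2.symm
  have hlocP : IsLocatingPartition G P := ⟨hpartition, hloc⟩
  have hpd : partitionDim G ≤ P.ncard := Nat.sInf_le ⟨P, hlocP, rfl⟩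
  have hc1 : P1.ncard ≤ M.ncard := by
    rw [hP1def]; exact Set.ncard_image_le (Set.toFinite _)
  have hc3 : P3.ncard ≤ Z.ncard := by
    rw [hP3def]; exact Set.ncard_image_le (Set.toFinite _)
  have hfMsub : f '' M ⊆ W := by
    rintro x ⟨a, ha, rfl⟩; exact hfW a ha
  have hfMcard : (f '' M).ncard = M.ncard := Set.ncard_image_of_injOn hfinj
  have hc2 : P2.ncard ≤ W.ncard - M.ncard := by
    rw [hP2def]
    calc ((fun w => ({w} : Set V)) '' (W \ f '' M)).ncard
        ≤ (W \ f '' M).ncard := Set.ncard_image_le (Set.toFinite _)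
      _ = W.ncard - (f '' M).ncard := Set.ncard_diff hfMsub (Set.toFinite _)
      _ = W.ncard - M.ncard := by rw [hfMcard]
  have hPcard : P.ncard ≤ M.ncard + (W.ncard - M.ncard) + Z.ncard := by
    have e1 : P.ncard ≤ (P1 ∪ P2).ncard + P3.ncard := by
      rw [hPdef]; exact Set.ncard_union_le _ _
    have e2 : (P1 ∪ P2).ncard ≤ P1.ncard + P2.ncard := Set.ncard_union_le _ _
    omega
  omega
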